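/- Functoriality of the monad construction: a morphism β : (T,η,τ,⦃−⦄) → (T',η',τ',⦃−⦄') of heterogeneous substitution systems is a monad morphism between the induced monads (T,η,μ^T) and (T',η',μ^{T'}), i.e., β ∘ η = η' and β ∘ μ^T = μ^{T'} ∘ (β·β). Consequently the assignment of monads to substitution systems extends to a functor HSS(H,θ) → Mon(C). -/

import Mathlib

open CategoryTheory Limits

universe v u

/-- A pointed endofunctor on `C`. -/
structure Ptd (C : Type u) [Category.{v} C] where
  Z : C ⥤ C
  e : 𝟭 C ⟶ Z

/-- A *signature* over `C`: an endofunctor `H` on the endofunctor category `[C,C]`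
together with a strength `θ : (H −)·U∼ ⟶ H (−·U∼)`, natural in both variables and
satisfying the unit and composition coherence laws (here `X·Z` is the composite
`Z ⋙ X`, i.e. `A ↦ X (Z A)`). -/
structure Signature (C : Type u) [Category.{v} C] where
  H : (C ⥤ C) ⥤ (C ⥤ C)
  θ : ∀ (X : C ⥤ C) (Z : Ptd C), (Z.Z ⋙ H.obj X) ⟶ H.obj (Z.Z ⋙ X)
  θ_nat_X : ∀ {X X' : C ⥤ C} (α : X ⟶ X') (Z : Ptd C),
      Functor.whiskerLeft Z.Z (H.map α) ≫ θ X' Z = θ X Z ≫ H.map (Functor.whiskerLeft Z.Z α)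
  θ_nat_Z : ∀ (X : C ⥤ C) {Z Z' : Ptd C} (g : Z.Z ⟶ Z'.Z), Z.e ≫ g = Z'.e →
      Functor.whiskerRight g (H.obj X) ≫ θ X Z' = θ X Z ≫ H.map (Functor.whiskerRight g X)
  θ_id : ∀ X : C ⥤ C,
      θ X ⟨𝟭 C, 𝟙 (𝟭 C)⟩ =
        (Functor.leftUnitor (H.obj X)).hom ≫ H.map (Functor.leftUnitor X).inv
  θ_comp : ∀ (X : C ⥤ C) (Z Z' : Ptd C),
      θ X ⟨Z.Z ⋙ Z'.Z, Z.e ≫ Functor.whiskerLeft Z.Z Z'.e⟩ =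
        (Functor.associator Z.Z Z'.Z (H.obj X)).hom ≫
          Functor.whiskerLeft Z.Z (θ X Z') ≫ θ (Z'.Z ⋙ X) Z ≫
          H.map (Functor.associator Z.Z Z'.Z X).inv

variable {C : Type u} [Category.{v} C]

/-- A *heterogeneous substitution system* for a signature `(H, θ)`:
an `(Id + H)`-algebra, presented by its components `η : Id ⟶ T` and `τ : H T ⟶ T`,
together with, for every morphism of pointed endofunctors `f : (Z,e) ⟶ (T,η)`,
a unique bracket `⦃f⦄ : T·Z ⟶ T` satisfying the two substitution equations. -/
structure HSS (S : Signature C) where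
  T : C ⥤ C
  η : 𝟭 C ⟶ T
  τ : S.H.obj T ⟶ T
  bracket : ∀ (Z : Ptd C) (f : Z.Z ⟶ T), Z.e ≫ f = η → (Z.Z ⋙ T ⟶ T)
  bracket_η : ∀ (Z : Ptd C) (f : Z.Z ⟶ T) (hf : Z.e ≫ f = η),
      Functor.whiskerLeft Z.Z η ≫ bracket Z f hf = f
  bracket_τ : ∀ (Z : Ptd C) (f : Z.Z ⟶ T) (hf : Z.e ≫ f = η),
      Functor.whiskerLeft Z.Z τ ≫ bracket Z f hf = S.θ T Z ≫ S.H.map (bracket Z f hf) ≫ τ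
  bracket_unique : ∀ (Z : Ptd C) (f : Z.Z ⟶ T) (hf : Z.e ≫ f = η)
      (h : Z.Z ⋙ T ⟶ T),
      Functor.whiskerLeft Z.Z η ≫ h = f →
      Functor.whiskerLeft Z.Z τ ≫ h = S.θ T Z ≫ S.H.map h ≫ τ →
      h = bracket Z f hf

/-- **Functoriality of the monad construction**: a morphism
`β : (T,η,τ,⦃−⦄) ⟶ (T',η',τ',⦃−⦄')` of heterogeneous substitution systems is a monad
morphism between the induced monads `(T,η,μ^T)` and `(T',η',μ^{T'})`, i.e. `β ∘ η = η'`
(a hypothesis on substitution-system morphisms) and `β ∘ μ^T = μ^{T'} ∘ (β·β)`, where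
`β·β` is the horizontal composite.  Consequently the assignment of monads to
substitution systems extends to a functor `HSS(H,θ) ⟶ Mon(C)`. -/
theorem hss_morphism_is_monad_morphism (S : Signature C)
    (A B : HSS S) (β : A.T ⟶ B.T)
    (hη : A.η ≫ β = B.η)
    (hτ : A.τ ≫ β = S.H.map β ≫ B.τ)
    (hbr : ∀ (Z : Ptd C) (f : Z.Z ⟶ A.T) (hf : Z.e ≫ f = A.η)
        (hf' : Z.e ≫ (f ≫ β) = B.η),
      A.bracket Z f hf ≫ β = Functor.whiskerLeft Z.Z β ≫ B.bracket Z (f ≫ β) hf')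
    (μA : A.T ⋙ A.T ⟶ A.T)
    (hμA : μA = A.bracket ⟨A.T, A.η⟩ (𝟙 A.T) (Category.comp_id A.η))
    (μB : B.T ⋙ B.T ⟶ B.T)
    (hμB : μB = B.bracket ⟨B.T, B.η⟩ (𝟙 B.T) (Category.comp_id B.η)) :
    μA ≫ β = NatTrans.hcomp β β ≫ μB := by
  have hf' : (⟨A.T, A.η⟩ : Ptd C).e ≫ (𝟙 A.T ≫ β) = B.η := by
    simpa using hη
  -- unit law for μB
  have hu : ∀ X : C, B.η.app (B.T.obj X) ≫ μB.app X = 𝟙 (B.T.obj X) := by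
    intro X
    have := congrArg (fun t => NatTrans.app t X)
      (B.bracket_η ⟨B.T, B.η⟩ (𝟙 B.T) (Category.comp_id B.η))
    simpa [← hμB] using this
  have h1 : Functor.whiskerLeft A.T B.η ≫ (Functor.whiskerRight β B.T ≫ μB) = 𝟙 A.T ≫ β := by
    ext X
    simp only [NatTrans.comp_app, Functor.whiskerLeft_app, Functor.whiskerRight_app,
      Category.id_comp, Functor.id_obj, Functor.comp_obj]
    rw [← Category.assoc, ← B.η.naturality, Category.assoc, hu]
    simp
  have hinter : Functor.whiskerLeft A.T B.τ ≫ Functor.whiskerRight β B.T =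
      Functor.whiskerRight β (S.H.obj B.T) ≫ Functor.whiskerLeft B.T B.τ := by
    ext X
    simpa using (B.τ.naturality (β.app X)).symm
  have hμBτ : Functor.whiskerLeft B.T B.τ ≫ μB =
      S.θ B.T ⟨B.T, B.η⟩ ≫ S.H.map μB ≫ B.τ := by
    rw [hμB]
    exact B.bracket_τ ⟨B.T, B.η⟩ (𝟙 B.T) (Category.comp_id B.η)
  have hθ := S.θ_nat_Z B.T (Z := ⟨A.T, A.η⟩) (Z' := ⟨B.T, B.η⟩) β hη
  have h2 : Functor.whiskerLeft A.T B.τ ≫ (Functor.whiskerRight β B.T ≫ μB) =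
      S.θ B.T ⟨A.T, A.η⟩ ≫ S.H.map (Functor.whiskerRight β B.T ≫ μB) ≫ B.τ := by
    rw [← Category.assoc, hinter, Category.assoc, hμBτ, ← Category.assoc, hθ,
      Functor.map_comp]
    simp only [Category.assoc]
  have key : Functor.whiskerRight β B.T ≫ μB = B.bracket ⟨A.T, A.η⟩ (𝟙 A.T ≫ β) hf' :=
    B.bracket_unique ⟨A.T, A.η⟩ (𝟙 A.T ≫ β) hf' _ h1 h2
  rw [hμA, hbr ⟨A.T, A.η⟩ (𝟙 A.T) (Category.comp_id A.η) hf', ← key]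
  ext X
  simp [NatTrans.hcomp]
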